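/- arXiv:1703.07011 — 2 statements merged into one kernel-verified Lean document; each statement's English description precedes it below -/
import Mathlib

section
/- If a Smale space $(X,\phi)$ is irreducible and $X$ is infinite, then $(X,\phi)$ is asymptotically essentially free: for every nonzero $n \in \mathbb{Z}$, the interior of the set $\{x \in X \mid (\phi^n(x), x) \in G_\phi^a\}$ is empty. -/
open scoped Topology

/-- A Smale space: a compact metric space `X` with a homeomorphism `phi`, constants
`eps0 > 0`, `0 < lam0 < 1`, and a bracket map satisfying (SS1) and (SS2). -/
structure SmaleSpace (X : Type*) [MetricSpace X] [CompactSpace X] where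
  phi : X ≃ₜ X
  eps0 : ℝ
  eps0_pos : 0 < eps0
  lam0 : ℝ
  lam0_pos : 0 < lam0
  lam0_lt_one : lam0 < 1
  br : X → X → X
  br_continuousOn :
    ContinuousOn (fun p : X × X => br p.1 p.2) {p : X × X | dist p.1 p.2 < eps0}
  br_self : ∀ x, br x x = x
  br_assoc₁ : ∀ x y z, dist x y < eps0 → dist y z < eps0 → dist x z < eps0 →
      dist (br x y) z < eps0 → dist x (br y z) < eps0 →
      br (br x y) z = br x z
  br_assoc₂ : ∀ x y z, dist x y < eps0 → dist y z < eps0 → dist x z < eps0 →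
      dist (br x y) z < eps0 → dist x (br y z) < eps0 →
      br x (br y z) = br x z
  br_phi : ∀ x y, dist x y < eps0 → dist (phi x) (phi y) < eps0 →
      br (phi x) (phi y) = phi (br x y)
  contract_s : ∀ x, ∀ ε : ℝ, 0 < ε → ε ≤ eps0 → ∀ y z,
      br y x = y → dist x y < ε → br z x = z → dist x z < ε →
      dist (phi y) (phi z) ≤ lam0 * dist y z
  contract_u : ∀ x, ∀ ε : ℝ, 0 < ε → ε ≤ eps0 → ∀ y z,
      br x y = y → dist x y < ε → br x z = z → dist x z < ε →
      dist (phi.symm y) (phi.symm z) ≤ lam0 * dist y z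

namespace SmaleSpace

variable {X : Type*} [MetricSpace X] [CompactSpace X] (S : SmaleSpace X)

/-- the `n`-th power `φ^n` of the homeomorphism, `n ∈ ℤ`. -/
def zp (n : ℤ) (x : X) : X := (S.phi.toEquiv ^ n) x

/-- local stable set `X^s(x, ε)`. -/
def stableSet (x : X) (ε : ℝ) : Set X := {y | S.br y x = y ∧ dist x y < ε}

/-- local unstable set `X^u(x, ε)`. -/
def unstableSet (x : X) (ε : ℝ) : Set X := {y | S.br x y = y ∧ dist x y < ε}

def Gs0 : Set (X × X) := {p | p.2 ∈ S.stableSet p.1 S.eps0}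

def Gu0 : Set (X × X) := {p | p.2 ∈ S.unstableSet p.1 S.eps0}

def GsN (n : ℕ) : Set (X × X) := {p | (S.zp n p.1, S.zp n p.2) ∈ S.Gs0}

def GuN (n : ℕ) : Set (X × X) := {p | (S.zp (-(n : ℤ)) p.1, S.zp (-(n : ℤ)) p.2) ∈ S.Gu0}

def GaN (n : ℕ) : Set (X × X) := S.GsN n ∩ S.GuN n

/-- the stable equivalence relation `G_φ^s`. -/
def Gs : Set (X × X) :=
  {p | Filter.Tendsto (fun n : ℕ => dist (S.zp n p.1) (S.zp n p.2)) Filter.atTop (𝓝 0)}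

/-- the unstable equivalence relation `G_φ^u`. -/
def Gu : Set (X × X) :=
  {p | Filter.Tendsto (fun n : ℕ => dist (S.zp (-(n : ℤ)) p.1) (S.zp (-(n : ℤ)) p.2))
        Filter.atTop (𝓝 0)}

/-- the asymptotic equivalence relation `G_φ^a`. -/
def Ga : Set (X × X) := S.Gs ∩ S.Gu

/-- irreducibility of a Smale space. -/
def Irred : Prop := ∀ U V : Set X, IsOpen U → IsOpen V → U.Nonempty → V.Nonempty →
  ∃ K : ℕ, (S.zp K '' U ∩ V).Nonempty

end SmaleSpace

/-- the cocycle sums `f^n` of a function `f : X → ℤ` along a bijection `φ`. -/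
def birkhoff {X : Type*} (φ : Equiv.Perm X) (f : X → ℤ) (n : ℤ) (x : X) : ℤ :=
  if 0 ≤ n then ∑ i ∈ Finset.range n.toNat, f ((φ ^ (i : ℤ)) x)
  else -∑ i ∈ Finset.range (-n).toNat, f ((φ ^ (n + (i : ℤ))) x)


set_option linter.unusedSectionVars false
set_option maxHeartbeats 1000000

section Prelim
variable {Y : Type*} [TopologicalSpace Y] (f : Y ≃ₜ Y)

lemma zpow_natCast_apply' (n : ℕ) (x : Y) : (f.toEquiv ^ (n:ℤ)) x = (⇑f)^[n] x := by
  induction n generalizing x with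
  | zero => simp
  | succ k ih =>
      rw [Function.iterate_succ_apply, ← ih]
      push_cast
      rw [zpow_add, zpow_one]
      simp [Equiv.Perm.mul_apply]

lemma zpow_neg_natCast_apply' (n : ℕ) (x : Y) :
    (f.toEquiv ^ (-(n:ℤ))) x = (⇑f.symm)^[n] x := by
  induction n generalizing x with
  | zero => simp
  | succ k ih => rw [Function.iterate_succ_apply', ← ih]
                 have : (-(↑(k+1):ℤ)) = (-1) + (-(k:ℤ)) := by push_cast; ring
                 rw [this, zpow_add]; simp [Equiv.Perm.inv_def]

end Prelim

namespace SmaleSpace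

variable {X : Type*} [MetricSpace X] [CompactSpace X] (S : SmaleSpace X)

lemma zp_add (a b : ℤ) (x : X) : S.zp (a + b) x = S.zp a (S.zp b x) := by
  simp [zp, zpow_add, Equiv.Perm.mul_apply]

lemma zp_zero (x : X) : S.zp 0 x = x := by simp [zp]

lemma zp_natCast (j : ℕ) (x : X) : S.zp (j:ℤ) x = (⇑S.phi)^[j] x :=
  zpow_natCast_apply' S.phi j x

lemma zp_neg_natCast (j : ℕ) (x : X) : S.zp (-(j:ℤ)) x = (⇑S.phi.symm)^[j] x :=
  zpow_neg_natCast_apply' S.phi j x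

lemma continuous_zp (k : ℤ) : Continuous (S.zp k) := by
  rcases le_or_gt 0 k with h | h
  · obtain ⟨j, rfl⟩ : ∃ j : ℕ, k = (j:ℤ) := ⟨k.toNat, by omega⟩
    have : S.zp (j:ℤ) = (⇑S.phi)^[j] := funext fun x => S.zp_natCast j x
    rw [this]
    exact S.phi.continuous.iterate j
  · obtain ⟨j, rfl⟩ : ∃ j : ℕ, k = -(j:ℤ) := ⟨k.natAbs, by omega⟩
    have : S.zp (-(j:ℤ)) = (⇑S.phi.symm)^[j] := funext fun x => S.zp_neg_natCast j x
    rw [this]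
    exact S.phi.symm.continuous.iterate j

lemma zp_injective (k : ℤ) : Function.Injective (S.zp k) :=
  (S.phi.toEquiv ^ k).injective

/-- uniform continuity of the bracket near the diagonal -/
lemma exists_br_delta (eta : ℝ) (heta : 0 < eta) :
    ∃ d : ℝ, 0 < d ∧ ∀ x y : X, dist x y < d →
      dist (S.br x y) x < eta ∧ dist (S.br x y) y < eta := by
  set D : Set (X × X) := {p : X × X | dist p.1 p.2 < S.eps0} with hD
  have hDopen : IsOpen D := isOpen_lt continuous_dist continuous_const
  set F : X × X → X × (X × X) := fun p => (S.br p.1 p.2, p) with hF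
  have hFcont : ContinuousOn F D := S.br_continuousOn.prodMk continuousOn_id
  set t : Set (X × (X × X)) := {q | dist q.1 q.2.1 < eta ∧ dist q.1 q.2.2 < eta} with ht
  have htopen : IsOpen t := by
    apply IsOpen.inter
    · exact isOpen_lt (continuous_dist.comp (continuous_fst.prodMk
        (continuous_fst.comp continuous_snd))) continuous_const
    · exact isOpen_lt (continuous_dist.comp (continuous_fst.prodMk
        (continuous_snd.comp continuous_snd))) continuous_const
  have hopen : IsOpen (D ∩ F ⁻¹' t) := hFcont.isOpen_inter_preimage hDopen htopen
  have hdiag : IsCompact ((fun x : X => (x, x)) '' Set.univ) :=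
    isCompact_univ.image (continuous_id.prodMk continuous_id)
  have hsubset : (fun x : X => (x, x)) '' Set.univ ⊆ D ∩ F ⁻¹' t := by
    rintro p ⟨x, -, rfl⟩
    refine ⟨by simp [hD, S.eps0_pos], ?_⟩
    simp [hF, ht, S.br_self, heta]
  obtain ⟨d, hdpos, hdsub⟩ := hdiag.exists_thickening_subset_open hopen hsubset
  refine ⟨d, hdpos, fun x y hxy => ?_⟩
  have hmem : (x, y) ∈ Metric.thickening d ((fun x : X => (x, x)) '' Set.univ) := by
    rw [Metric.mem_thickening_iff]
    exact ⟨(x, x), ⟨x, Set.mem_univ x, rfl⟩, by simp [Prod.dist_eq, dist_comm, hxy, hdpos]⟩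
  have := hdsub hmem
  exact this.2

lemma stable_iter {x y : X} (hbr : S.br y x = y) (hd : dist x y < S.eps0) (j : ℕ) :
    S.br ((⇑S.phi)^[j] y) ((⇑S.phi)^[j] x) = (⇑S.phi)^[j] y ∧
      dist ((⇑S.phi)^[j] x) ((⇑S.phi)^[j] y) ≤ S.lam0 ^ j * dist x y := by
  induction j with
  | zero => simpa using hbr
  | succ k ih =>
    obtain ⟨hb, hdk⟩ := ih
    have hlam0 := S.lam0_pos
    have hlam1 := S.lam0_lt_one
    have hdk' : dist ((⇑S.phi)^[k] x) ((⇑S.phi)^[k] y) < S.eps0 :=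
      lt_of_le_of_lt (hdk.trans (mul_le_of_le_one_left dist_nonneg
        (pow_le_one₀ hlam0.le hlam1.le))) hd
    have hcon := S.contract_s ((⇑S.phi)^[k] x) S.eps0 S.eps0_pos le_rfl
      ((⇑S.phi)^[k] y) ((⇑S.phi)^[k] x) hb hdk' (S.br_self _) (by simpa using S.eps0_pos)
    have hd1 : dist ((⇑S.phi)^[k+1] x) ((⇑S.phi)^[k+1] y)
        ≤ S.lam0 * dist ((⇑S.phi)^[k] x) ((⇑S.phi)^[k] y) := by
      rw [Function.iterate_succ_apply', Function.iterate_succ_apply',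
        dist_comm ((⇑S.phi) ((⇑S.phi)^[k] x)), dist_comm ((⇑S.phi)^[k] x)]
      exact hcon
    have hdnew : dist ((⇑S.phi)^[k+1] x) ((⇑S.phi)^[k+1] y) ≤ S.lam0 ^ (k+1) * dist x y := by
      calc dist ((⇑S.phi)^[k+1] x) ((⇑S.phi)^[k+1] y)
          ≤ S.lam0 * dist ((⇑S.phi)^[k] x) ((⇑S.phi)^[k] y) := hd1
        _ ≤ S.lam0 * (S.lam0 ^ k * dist x y) := mul_le_mul_of_nonneg_left hdk hlam0.le
        _ = S.lam0 ^ (k+1) * dist x y := by ring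
    refine ⟨?_, hdnew⟩
    have hdd : dist ((⇑S.phi)^[k+1] y) ((⇑S.phi)^[k+1] x) < S.eps0 := by
      rw [dist_comm]
      exact lt_of_le_of_lt hdnew (lt_of_le_of_lt (mul_le_of_le_one_left dist_nonneg
        (pow_le_one₀ hlam0.le hlam1.le)) hd)
    rw [Function.iterate_succ_apply', Function.iterate_succ_apply'] at hdd
    rw [Function.iterate_succ_apply', Function.iterate_succ_apply',
      S.br_phi _ _ (by rw [dist_comm]; exact hdk') hdd, hb]

lemma unstable_rigid {x y : X} (hbr : S.br x y = y)
    (h : ∀ j : ℕ, dist ((⇑S.phi)^[j] x) ((⇑S.phi)^[j] y) < S.eps0) : x = y := by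
  have hb : ∀ j : ℕ, S.br ((⇑S.phi)^[j] x) ((⇑S.phi)^[j] y) = (⇑S.phi)^[j] y := by
    intro j; induction j with
    | zero => simpa using hbr
    | succ k ih =>
      have hdd : dist ((⇑S.phi)^[k+1] x) ((⇑S.phi)^[k+1] y) < S.eps0 := h (k+1)
      rw [Function.iterate_succ_apply', Function.iterate_succ_apply'] at hdd
      rw [Function.iterate_succ_apply', Function.iterate_succ_apply',
        S.br_phi _ _ (h k) hdd, ih]
  have hq : ∀ j : ℕ, dist x y ≤ S.lam0 ^ j * dist ((⇑S.phi)^[j] x) ((⇑S.phi)^[j] y) := by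
    intro j; induction j with
    | zero => simp
    | succ k ih =>
      have hcon := S.contract_u ((⇑S.phi)^[k+1] x) S.eps0 S.eps0_pos le_rfl
        ((⇑S.phi)^[k+1] x) ((⇑S.phi)^[k+1] y) (S.br_self _) (by simpa using S.eps0_pos)
        (hb (k+1)) (h (k+1))
      have he : ∀ w : X, S.phi.symm ((⇑S.phi)^[k+1] w) = (⇑S.phi)^[k] w := by
        intro w; rw [Function.iterate_succ_apply']; exact S.phi.symm_apply_apply _
      rw [he, he] at hcon
      calc dist x y ≤ S.lam0 ^ k * dist ((⇑S.phi)^[k] x) ((⇑S.phi)^[k] y) := ih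
        _ ≤ S.lam0 ^ k * (S.lam0 * dist ((⇑S.phi)^[k+1] x) ((⇑S.phi)^[k+1] y)) :=
            mul_le_mul_of_nonneg_left hcon (pow_nonneg S.lam0_pos.le k)
        _ = S.lam0 ^ (k+1) * dist ((⇑S.phi)^[k+1] x) ((⇑S.phi)^[k+1] y) := by ring
  have hle : ∀ j, dist x y ≤ S.lam0 ^ j * S.eps0 := fun j =>
    (hq j).trans (mul_le_mul_of_nonneg_left (h j).le (pow_nonneg S.lam0_pos.le j))
  have htend : Filter.Tendsto (fun j : ℕ => S.lam0 ^ j * S.eps0) Filter.atTop (𝓝 0) := by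
    simpa using (tendsto_pow_atTop_nhds_zero_of_lt_one S.lam0_pos.le S.lam0_lt_one).mul_const
      S.eps0
  have : dist x y ≤ 0 := ge_of_tendsto' htend hle
  exact dist_le_zero.mp this

lemma stable_rigid {x y : X} (hbr : S.br y x = y)
    (h : ∀ j : ℕ, dist ((⇑S.phi.symm)^[j] x) ((⇑S.phi.symm)^[j] y) < S.eps0) : x = y := by
  have hphi : ∀ (k : ℕ) (w : X), S.phi ((⇑S.phi.symm)^[k+1] w) = (⇑S.phi.symm)^[k] w := by
    intro k w; rw [Function.iterate_succ_apply']; exact S.phi.apply_symm_apply _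
  have hb : ∀ j : ℕ, S.br ((⇑S.phi.symm)^[j] y) ((⇑S.phi.symm)^[j] x) = (⇑S.phi.symm)^[j] y := by
    intro j; induction j with
    | zero => simpa using hbr
    | succ k ih =>
      have h2 := S.br_phi ((⇑S.phi.symm)^[k+1] y) ((⇑S.phi.symm)^[k+1] x)
        (by rw [dist_comm]; exact h (k+1)) (by rw [hphi, hphi, dist_comm]; exact h k)
      rw [hphi, hphi, ih] at h2
      have h3 := congrArg (⇑S.phi.symm) h2.symm
      rw [S.phi.symm_apply_apply] at h3
      rw [h3]
      exact (Function.iterate_succ_apply' _ _ _).symm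
  have hq : ∀ j : ℕ, dist x y ≤ S.lam0 ^ j * dist ((⇑S.phi.symm)^[j] x) ((⇑S.phi.symm)^[j] y) := by
    intro j; induction j with
    | zero => simp
    | succ k ih =>
      have hcon := S.contract_s ((⇑S.phi.symm)^[k+1] x) S.eps0 S.eps0_pos le_rfl
        ((⇑S.phi.symm)^[k+1] y) ((⇑S.phi.symm)^[k+1] x) (hb (k+1)) (h (k+1))
        (S.br_self _) (by simpa using S.eps0_pos)
      rw [hphi, hphi] at hcon
      calc dist x y ≤ S.lam0 ^ k * dist ((⇑S.phi.symm)^[k] x) ((⇑S.phi.symm)^[k] y) := ih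
        _ ≤ S.lam0 ^ k * (S.lam0 * dist ((⇑S.phi.symm)^[k+1] x) ((⇑S.phi.symm)^[k+1] y)) := by
            apply mul_le_mul_of_nonneg_left _ (pow_nonneg S.lam0_pos.le k)
            rw [dist_comm ((⇑S.phi.symm)^[k] x), dist_comm ((⇑S.phi.symm)^[k+1] x)]
            exact hcon
        _ = S.lam0 ^ (k+1) * dist ((⇑S.phi.symm)^[k+1] x) ((⇑S.phi.symm)^[k+1] y) := by ring
  have hle : ∀ j, dist x y ≤ S.lam0 ^ j * S.eps0 := fun j =>
    (hq j).trans (mul_le_mul_of_nonneg_left (h j).le (pow_nonneg S.lam0_pos.le j))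
  have htend : Filter.Tendsto (fun j : ℕ => S.lam0 ^ j * S.eps0) Filter.atTop (𝓝 0) := by
    simpa using (tendsto_pow_atTop_nhds_zero_of_lt_one S.lam0_pos.le S.lam0_lt_one).mul_const
      S.eps0
  have : dist x y ≤ 0 := ge_of_tendsto' htend hle
  exact dist_le_zero.mp this

/-- the expansivity constant and its properties -/
lemma exists_expansivity : ∃ d : ℝ, 0 < d ∧ d ≤ S.eps0 / 4 ∧
    (∀ a b : X, (∀ k : ℤ, dist (S.zp k a) (S.zp k b) < d) → a = b) := by
  obtain ⟨d0, hd0pos, hbr0⟩ := S.exists_br_delta (S.eps0 / 4) (by linarith [S.eps0_pos])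
  have heps := S.eps0_pos
  refine ⟨min d0 (S.eps0/4), lt_min hd0pos (by linarith), min_le_right _ _, ?_⟩
  intro a b h
  -- forward distances
  have hfwd : ∀ j : ℕ, dist ((⇑S.phi)^[j] a) ((⇑S.phi)^[j] b) < min d0 (S.eps0/4) := by
    intro j
    have := h (j : ℤ)
    rwa [S.zp_natCast, S.zp_natCast] at this
  have hab : dist a b < min d0 (S.eps0/4) := by simpa using hfwd 0
  have hab4 : dist a b < S.eps0/4 := lt_of_lt_of_le hab (min_le_right _ _)
  have habe : dist a b < S.eps0 := by linarith
  obtain ⟨hw1, hw2⟩ := hbr0 a b (lt_of_lt_of_le hab (min_le_left _ _))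
  set w := S.br a b with hwdef
  have hwb : S.br w b = w :=
    S.br_assoc₁ a b b habe (by simp [heps]) habe (by linarith) (by rw [S.br_self]; exact habe)
  have haw : S.br a w = w := by
    have h5 := S.br_assoc₂ a a b (by simp [heps]) habe habe (by rw [S.br_self]; exact habe)
      (by rw [dist_comm] at hw1; exact lt_of_lt_of_le hw1 (by linarith))
    rw [hwdef]
    exact h5
  -- a = w by unstable rigidity
  have haweq : a = w := by
    apply S.unstable_rigid haw
    intro j
    have h1 : dist ((⇑S.phi)^[j] b) ((⇑S.phi)^[j] w) ≤ S.lam0 ^ j * dist b w :=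
      (S.stable_iter hwb (by rw [dist_comm]; linarith [hw2]) j).2
    have h2 : dist b w < S.eps0 / 4 := by rw [dist_comm]; exact hw2
    have h3 : S.lam0 ^ j * dist b w ≤ dist b w :=
      mul_le_of_le_one_left dist_nonneg (pow_le_one₀ S.lam0_pos.le S.lam0_lt_one.le)
    calc dist ((⇑S.phi)^[j] a) ((⇑S.phi)^[j] w)
        ≤ dist ((⇑S.phi)^[j] a) ((⇑S.phi)^[j] b) + dist ((⇑S.phi)^[j] b) ((⇑S.phi)^[j] w) :=
          dist_triangle _ _ _
      _ < S.eps0/4 + S.eps0/4 := by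
          have := lt_of_lt_of_le (hfwd j) (min_le_right _ _)
          have h4 := lt_of_le_of_lt (h1.trans h3) h2
          linarith
      _ < S.eps0 := by linarith
  have hba : S.br a b = a := by rw [← hwdef, ← haweq]
  -- now stable rigidity backwards
  refine (S.stable_rigid hba fun j => ?_).symm
  have := h (-(j:ℤ))
  rw [S.zp_neg_natCast, S.zp_neg_natCast] at this
  rw [dist_comm]
  exact lt_of_lt_of_le this (le_trans (min_le_right _ _) (by linarith))

end SmaleSpace

/-- if a Smale space `(X,φ)` is irreducible and `X` is infinite, then
`(X,φ)` is asymptotically essentially free: for every `n ≠ 0`, the interior of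
`{x ∈ X : (φ^n(x), x) ∈ G_φ^a}` is empty. -/
theorem asymptotically_essentially_free_of_irreducible {X : Type*} [MetricSpace X]
    [CompactSpace X] (S : SmaleSpace X) (hirr : S.Irred) (hinf : Infinite X) :
    ∀ n : ℤ, n ≠ 0 → interior {x : X | (S.zp n x, x) ∈ S.Ga} = ∅ := by
  intro n hn
  by_contra hne
  haveI := hinf
  set A := {x : X | (S.zp n x, x) ∈ S.Ga} with hA
  have hU : (interior A).Nonempty := Set.nonempty_iff_ne_empty.2 hne
  obtain ⟨δ, hδpos, hδle, hexp⟩ := S.exists_expansivity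
  have heps := S.eps0_pos
  classical
  -- the closed sets C m
  set C : ℕ → Set X := fun m => {x | ∀ j : ℕ, m ≤ j →
    dist (S.zp (j:ℤ) (S.zp n x)) (S.zp (j:ℤ) x) ≤ δ/2 ∧
    dist (S.zp (-(j:ℤ)) (S.zp n x)) (S.zp (-(j:ℤ)) x) ≤ δ/2} with hC
  have hCclosed : ∀ m, IsClosed (C m) := by
    intro m
    have hrw : C m = ⋂ (j : ℕ), ⋂ (_ : m ≤ j),
        ({x | dist (S.zp (j:ℤ) (S.zp n x)) (S.zp (j:ℤ) x) ≤ δ/2} ∩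
         {x | dist (S.zp (-(j:ℤ)) (S.zp n x)) (S.zp (-(j:ℤ)) x) ≤ δ/2}) := by
      ext x
      simp only [hC, Set.mem_setOf_eq, Set.mem_iInter, Set.mem_inter_iff]
    rw [hrw]
    refine isClosed_iInter fun j => isClosed_iInter fun _ => IsClosed.inter ?_ ?_
    · exact isClosed_le (Continuous.dist ((S.continuous_zp _).comp (S.continuous_zp n))
        (S.continuous_zp _)) continuous_const
    · exact isClosed_le (Continuous.dist ((S.continuous_zp _).comp (S.continuous_zp n))
        (S.continuous_zp _)) continuous_const
  have hcover : ∀ x ∈ A, ∃ m, x ∈ C m := by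
    intro x hx
    rw [hA, Set.mem_setOf_eq] at hx
    have hs : Filter.Tendsto (fun j : ℕ => dist (S.zp (j:ℤ) (S.zp n x)) (S.zp (j:ℤ) x))
        Filter.atTop (𝓝 0) := hx.1
    have hu : Filter.Tendsto (fun j : ℕ => dist (S.zp (-(j:ℤ)) (S.zp n x)) (S.zp (-(j:ℤ)) x))
        Filter.atTop (𝓝 0) := hx.2
    have h1 := hs.eventually (gt_mem_nhds (half_pos hδpos))
    have h2 := hu.eventually (gt_mem_nhds (half_pos hδpos))
    rw [Filter.eventually_atTop] at h1 h2
    obtain ⟨m1, hm1⟩ := h1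
    obtain ⟨m2, hm2⟩ := h2
    refine ⟨max m1 m2, fun j hj => ⟨(hm1 j (le_trans (le_max_left _ _) hj)).le,
      (hm2 j (le_trans (le_max_right _ _) hj)).le⟩⟩
  -- Baire category
  have hFclosed : ∀ m : ℕ, IsClosed (C m ∪ (interior A)ᶜ) := fun m =>
    (hCclosed m).union (isClosed_compl_iff.2 isOpen_interior)
  have hFunion : ⋃ m, (C m ∪ (interior A)ᶜ) = Set.univ := by
    ext x
    simp only [Set.mem_iUnion, Set.mem_union, Set.mem_compl_iff, Set.mem_univ, iff_true]
    by_cases hx : x ∈ interior A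
    · obtain ⟨m, hm⟩ := hcover x (interior_subset hx)
      exact ⟨m, Or.inl hm⟩
    · exact ⟨0, Or.inr hx⟩
  have hdense := dense_iUnion_interior_of_closed hFclosed hFunion
  obtain ⟨y0, hy0i, hy0U⟩ : ∃ y, y ∈ (⋃ m, interior (C m ∪ (interior A)ᶜ)) ∧ y ∈ interior A := by
    obtain ⟨y, hy1, hy2⟩ := hdense.exists_mem_open isOpen_interior hU
    exact ⟨y, hy1, hy2⟩
  obtain ⟨m, hy0m⟩ := Set.mem_iUnion.mp hy0i
  set V : Set X := interior (C m ∪ (interior A)ᶜ) ∩ interior A with hV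
  have hVopen : IsOpen V := isOpen_interior.inter isOpen_interior
  have hVne : V.Nonempty := ⟨y0, hy0m, hy0U⟩
  have hVC : V ⊆ C m := by
    rintro w ⟨hw1, hw2⟩
    rcases interior_subset hw1 with h | h
    · exact h
    · exact absurd hw2 h
  -- control helper
  have hctrl : ∀ x ∈ C m, ∀ l : ℤ, ((m:ℤ) ≤ l ∨ l ≤ -(m:ℤ)) →
      dist (S.zp l (S.zp n x)) (S.zp l x) ≤ δ/2 := by
    intro x hx l hl
    rcases hl with hl | hl
    · obtain ⟨j, rfl⟩ : ∃ j : ℕ, l = (j:ℤ) := ⟨l.toNat, by omega⟩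
      exact (hx j (by omega)).1
    · obtain ⟨j, rfl⟩ : ∃ j : ℕ, l = -(j:ℤ) := ⟨l.natAbs, by omega⟩
      exact (hx j (by omega)).2
  -- shifting distances
  have hshift : ∀ (t k : ℤ) (x : X), dist (S.zp k (S.zp n (S.zp t x))) (S.zp k (S.zp t x))
      = dist (S.zp (k+t) (S.zp n x)) (S.zp (k+t) x) := by
    intro t k x
    have e1 : S.zp k (S.zp n (S.zp t x)) = S.zp (k+t) (S.zp n x) := by
      rw [← S.zp_add, ← S.zp_add, ← S.zp_add]
      congr 1
      ring
    have e2 : S.zp k (S.zp t x) = S.zp (k+t) x := (S.zp_add k t x).symm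
    rw [e1, e2]
  -- open images
  have himg : ∀ (k : ℤ) (T : Set X), IsOpen T → IsOpen (S.zp k '' T) := by
    intro k T hT
    have himee : S.zp k '' T = S.zp (-k) ⁻¹' T := by
      ext u
      constructor
      · rintro ⟨v, hv, rfl⟩
        have : S.zp (-k) (S.zp k v) = v := by
          rw [← S.zp_add, show -k + k = 0 by ring, S.zp_zero]
        simpa [Set.mem_preimage, this] using hv
      · intro hu
        refine ⟨S.zp (-k) u, hu, ?_⟩
        rw [← S.zp_add, show k + -k = 0 by ring, S.zp_zero]
    rw [himee]
    exact hT.preimage (S.continuous_zp _)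
  -- KEY: every open subset of V generates a fixed point of zp n
  have key : ∀ V' : Set X, IsOpen V' → V'.Nonempty → V' ⊆ C m →
      ∃ y ∈ S.zp (m:ℤ) '' V', S.zp n y = y := by
    intro V' hV'o hV'ne hV'C
    obtain ⟨K0, p, hp1, hp2⟩ := hirr (S.zp (-(m:ℤ)) '' V') (S.zp (-(4*(m:ℤ))) '' (S.zp (m:ℤ) '' V'))
      (himg _ _ hV'o) (himg _ _ (himg _ _ hV'o)) (hV'ne.image _) ((hV'ne.image _).image _)
    obtain ⟨z, hzW2, hzp⟩ := hp1
    obtain ⟨w, hwW1, hwp⟩ := hp2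
    obtain ⟨x2, hx2V, hx2eq⟩ := hzW2
    have hweq : w = S.zp (4*(m:ℤ) + (K0:ℤ)) z := by
      have h1 : S.zp (4*(m:ℤ)) (S.zp (-(4*(m:ℤ))) w) = S.zp (4*(m:ℤ)) (S.zp (K0:ℤ) z) := by
        rw [hwp, hzp]
      rw [← S.zp_add, ← S.zp_add, show 4*(m:ℤ) + -(4*(m:ℤ)) = 0 by ring, S.zp_zero] at h1
      exact h1
    obtain ⟨x1, hx1V, hx1eq⟩ := hwW1
    refine ⟨w, ⟨x1, hx1V, hx1eq⟩, ?_⟩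
    apply hexp (S.zp n w) w
    intro k
    by_cases hk : (0:ℤ) ≤ k ∨ k ≤ -(2*(m:ℤ))
    · have hb : dist (S.zp k (S.zp n w)) (S.zp k w) ≤ δ/2 := by
        rw [← hx1eq, hshift]
        exact hctrl x1 (hV'C hx1V) (k + (m:ℤ)) (by omega)
      linarith
    · push_neg at hk
      have hw2 : w = S.zp (3*(m:ℤ)+(K0:ℤ)) x2 := by
        rw [hweq, ← hx2eq, ← S.zp_add]
        congr 1
        ring
      have hb : dist (S.zp k (S.zp n w)) (S.zp k w) ≤ δ/2 := by
        rw [hw2, hshift]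
        exact hctrl x2 (hV'C hx2V) (k + (3*(m:ℤ)+(K0:ℤ))) (by omega)
      linarith
  -- every point of W := zp m '' V is fixed by zp n
  have hWfix : ∀ w ∈ S.zp (m:ℤ) '' V, S.zp n w = w := by
    intro w hw
    have hclsd : IsClosed {u : X | S.zp n u = u} := isClosed_eq (S.continuous_zp n) continuous_id
    have hcl : w ∈ closure {u : X | S.zp n u = u} := by
      rw [mem_closure_iff]
      intro O hO hwO
      have hsub : S.zp (-(m:ℤ)) '' (O ∩ S.zp (m:ℤ) '' V) ⊆ V := by
        rintro u ⟨q, ⟨hqO, ⟨v, hvV, hveq⟩⟩, hueq⟩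
        have : u = v := by
          rw [← hueq, ← hveq, ← S.zp_add, show -(m:ℤ) + (m:ℤ) = 0 by ring, S.zp_zero]
        rwa [this]
      obtain ⟨y, hyW, hyfix⟩ := key (S.zp (-(m:ℤ)) '' (O ∩ S.zp (m:ℤ) '' V))
        (himg _ _ (hO.inter (himg _ _ hVopen)))
        (Set.Nonempty.image _ ⟨w, hwO, hw⟩) (hsub.trans hVC)
      obtain ⟨u, ⟨q, hqOW, hqeq⟩, hyeq⟩ := hyW
      have hyq : y = q := by
        rw [← hyeq, ← hqeq, ← S.zp_add, show (m:ℤ) + -(m:ℤ) = 0 by ring, S.zp_zero]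
      exact ⟨y, by rw [hyq]; exact hqOW.1, hyfix⟩
    rwa [hclsd.closure_eq] at hcl
  -- periodicity
  set N := n.natAbs with hNdef
  have hNpos : 0 < N := Int.natAbs_pos.mpr hn
  have hper : ∀ w : X, S.zp n w = w → ∀ k : ℤ, S.zp k w = S.zp (k % (N:ℤ)) w := by
    intro w hw k
    have hNfix : S.zp (N:ℤ) w = w := by
      rcases Int.natAbs_eq n with h | h
      · rw [← hNdef] at h  -- still n = N
        rw [← h]
        exact hw
      · have h2 : S.zp (N:ℤ) (S.zp n w) = S.zp ((N:ℤ) + n) w := (S.zp_add _ _ _).symm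
        rw [hw] at h2
        rw [h2, show (N:ℤ) + n = 0 by omega, S.zp_zero]
    have hNfix' : S.zp (-(N:ℤ)) w = w := by
      have h3 := congrArg (S.zp (-(N:ℤ))) hNfix
      rw [← S.zp_add, show -(N:ℤ) + (N:ℤ) = 0 by ring, S.zp_zero] at h3
      exact h3.symm
    have hmul : ∀ q : ℤ, S.zp ((N:ℤ) * q) w = w := by
      intro q
      induction q using Int.induction_on with
      | zero => rw [mul_zero, S.zp_zero]
      | succ i ih => rw [show (N:ℤ)*((i:ℤ)+1) = (N:ℤ) + (N:ℤ)*(i:ℤ) by ring, S.zp_add, ih, hNfix]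
      | pred i ih => rw [show (N:ℤ)*(-(i:ℤ)-1) = -(N:ℤ) + (N:ℤ)*(-(i:ℤ)) by ring, S.zp_add, ih, hNfix']
    calc S.zp k w = S.zp (k % (N:ℤ) + (N:ℤ) * (k / (N:ℤ))) w := by
          congr 1
          exact (Int.emod_add_mul_ediv k (N:ℤ)).symm
      _ = S.zp (k % (N:ℤ)) (S.zp ((N:ℤ) * (k / (N:ℤ))) w) := S.zp_add _ _ _
      _ = S.zp (k % (N:ℤ)) w := by rw [hmul]
  -- an isolated point
  obtain ⟨w0, hw0W⟩ := hVne.image (S.zp (m:ℤ))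
  have hw0fix := hWfix w0 hw0W
  have hWopen : IsOpen (S.zp (m:ℤ) '' V) := himg _ _ hVopen
  set T := (S.zp (m:ℤ) '' V) ∩ ⋂ (j : Fin N), {w : X | dist (S.zp ((j:ℕ):ℤ) w) (S.zp ((j:ℕ):ℤ) w0) < δ/2} with hT
  have hTopen : IsOpen T := hWopen.inter (isOpen_iInter_of_finite fun j =>
    isOpen_lt ((S.continuous_zp _).dist continuous_const) continuous_const)
  have hw0T : w0 ∈ T := by
    refine ⟨hw0W, Set.mem_iInter.2 fun j => ?_⟩
    simpa [Set.mem_setOf_eq] using half_pos hδpos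
  have hTsingle : T = {w0} := by
    apply Set.eq_singleton_iff_unique_mem.2 ⟨hw0T, ?_⟩
    rintro w ⟨hwW, hwball⟩
    have hwfix := hWfix w hwW
    apply hexp w w0
    intro k
    rw [hper w hwfix k, hper w0 hw0fix k]
    have hk0 : 0 ≤ k % (N:ℤ) := Int.emod_nonneg k (by positivity)
    have hkN : k % (N:ℤ) < (N:ℤ) := Int.emod_lt_of_pos k (by exact_mod_cast hNpos)
    have hjlt : (k % (N:ℤ)).toNat < N := by omega
    have hjcast : (((k % (N:ℤ)).toNat : ℕ):ℤ) = k % (N:ℤ) := by omega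
    have hball := Set.mem_iInter.1 hwball ⟨(k % (N:ℤ)).toNat, hjlt⟩
    simp only [Set.mem_setOf_eq] at hball
    rw [← hjcast]
    exact lt_of_lt_of_le hball (by linarith)
  -- the finite dense orbit
  have hOrbfin : (Set.range (fun j : Fin N => S.zp ((j:ℕ):ℤ) w0)).Finite := Set.finite_range _
  have hOrbdense : Dense (Set.range (fun j : Fin N => S.zp ((j:ℕ):ℤ) w0)) := by
    rw [dense_iff_inter_open]
    intro O hO hOne
    obtain ⟨K, q, hq1, hq2⟩ := hirr O T hO hTopen hOne ⟨w0, hw0T⟩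
    rw [hTsingle, Set.mem_singleton_iff] at hq2
    obtain ⟨v, hvO, hvq⟩ := hq1
    have hv : v = S.zp (-(K:ℤ)) w0 := by
      have h4 := congrArg (S.zp (-(K:ℤ))) hvq
      rw [← S.zp_add, show -(K:ℤ) + (K:ℤ) = 0 by ring, S.zp_zero, hq2] at h4
      exact h4
    have hk0 : 0 ≤ (-(K:ℤ)) % (N:ℤ) := Int.emod_nonneg _ (by positivity)
    have hkN : (-(K:ℤ)) % (N:ℤ) < (N:ℤ) := Int.emod_lt_of_pos _ (by exact_mod_cast hNpos)
    have hjlt : ((-(K:ℤ)) % (N:ℤ)).toNat < N := by omega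
    have hjcast : ((((-(K:ℤ)) % (N:ℤ)).toNat : ℕ):ℤ) = (-(K:ℤ)) % (N:ℤ) := by omega
    refine ⟨v, hvO, ⟨(⟨((-(K:ℤ)) % (N:ℤ)).toNat, hjlt⟩ : Fin N), ?_⟩⟩
    show S.zp _ w0 = v
    rw [hv, hper w0 hw0fix (-(K:ℤ))]
    congr 1
  have hOrbuniv : Set.range (fun j : Fin N => S.zp ((j:ℕ):ℤ) w0) = Set.univ :=
    hOrbfin.isClosed.closure_eq ▸ hOrbdense.closure_eq
  have hfin : Finite X := Set.finite_univ_iff.mp (hOrbuniv ▸ hOrbfin)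
  haveI := hfin
  exact not_finite X
end

section
/- Let $A$ be the $N\times N$ matrix with all entries equal to $1$, and define the inductive limit group $H(A) = \varinjlim (M_N(\mathbb{Z}), T \mapsto ATA)$ with endomorphism $\alpha$ induced by $T \mapsto A^2 T$. Then the map sending the class $[T,k]$ to $\frac{1}{N^{2k-2}} s_N(T) \in \mathbb{Z}[\frac{1}{N^2}]$, where $s_N(T) = \sum_{i,j} t_{ij}$, is a well-defined group isomorphism $H(A) \cong \mathbb{Z}[\frac{1}{N^2}]$ satisfying $\xi \circ \alpha = \xi$; consequently $\alpha = \mathrm{id}$ on $H(A)$. -/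
/-- the `N × N` matrix with all entries `1`. -/
def onesMatrix (N : ℕ) : Matrix (Fin N) (Fin N) ℤ := Matrix.of fun _ _ => 1

/-- the connecting map `T ↦ A T A` of the inductive system defining `H(A)`. -/
def connMap (N : ℕ) (T : Matrix (Fin N) (Fin N) ℤ) : Matrix (Fin N) (Fin N) ℤ :=
  onesMatrix N * T * onesMatrix N

/-- `s_N(T) = ∑_{i,j} t_{ij}`. -/
def sumEntries (N : ℕ) (T : Matrix (Fin N) (Fin N) ℤ) : ℤ := ∑ i, ∑ j, T i j

/-- the identification relation of the inductive limit
`H(A) = lim (M_N(ℤ), T ↦ ATA)`: `[T,k] = [S,l]` iff the two elements agree at some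
common later stage `m`. -/
def indRel (N : ℕ) (p q : Matrix (Fin N) (Fin N) ℤ × ℕ) : Prop :=
  ∃ m : ℕ, p.2 ≤ m ∧ q.2 ≤ m ∧ (connMap N)^[m - p.2] p.1 = (connMap N)^[m - q.2] q.1

/-- the map `ξ([T,k]) = s_N(T) / N^{2k}` (levels indexed from `0`). -/
noncomputable def xiMap (N : ℕ) (p : Matrix (Fin N) (Fin N) ℤ × ℕ) : ℝ :=
  (sumEntries N p.1 : ℝ) / (N : ℝ) ^ (2 * p.2)

/-- the subgroup `ℤ[1/N²] ⊆ ℝ`. -/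
def zInvSq (N : ℕ) : Set ℝ := {x | ∃ (m : ℤ) (k : ℕ), x = (m : ℝ) / (N : ℝ) ^ (2 * k)}

lemma connMap_eq (N : ℕ) (T : Matrix (Fin N) (Fin N) ℤ) :
    connMap N T = (sumEntries N T) • onesMatrix N := by
  ext i j
  simp [connMap, onesMatrix, Matrix.mul_apply, sumEntries]
  exact Finset.sum_comm

lemma sumEntries_smul (N : ℕ) (c : ℤ) :
    sumEntries N (c • onesMatrix N) = c * N ^ 2 := by
  simp [sumEntries, onesMatrix]
  ring

lemma sumEntries_conn (N : ℕ) (T : Matrix (Fin N) (Fin N) ℤ) :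
    sumEntries N (connMap N T) = N ^ 2 * sumEntries N T := by
  rw [connMap_eq, sumEntries_smul]; ring

lemma connMap_iter_succ (N : ℕ) (T : Matrix (Fin N) (Fin N) ℤ) (n : ℕ) :
    (connMap N)^[n + 1] T = (((N:ℤ) ^ 2) ^ n * sumEntries N T) • onesMatrix N := by
  induction n with
  | zero => simpa using connMap_eq N T
  | succ n ih =>
      rw [Function.iterate_succ_apply', ih, connMap_eq, sumEntries_smul]
      congr 1
      ring

lemma sumEntries_iter (N : ℕ) (T : Matrix (Fin N) (Fin N) ℤ) (n : ℕ) :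
    sumEntries N ((connMap N)^[n] T) = ((N:ℤ) ^ 2) ^ n * sumEntries N T := by
  induction n with
  | zero => simp
  | succ n ih => rw [Function.iterate_succ_apply', sumEntries_conn, ih]; ring

lemma sumEntries_AAT (N : ℕ) (T : Matrix (Fin N) (Fin N) ℤ) :
    sumEntries N (onesMatrix N * onesMatrix N * T) = (N:ℤ) ^ 2 * sumEntries N T := by
  have : onesMatrix N * onesMatrix N * T = (N:ℤ) • (onesMatrix N * T) := by
    ext i j
    simp [onesMatrix, Matrix.mul_apply, Finset.mul_sum]
  rw [this]
  have h2 : sumEntries N ((N:ℤ) • (onesMatrix N * T)) = (N:ℤ) * sumEntries N (onesMatrix N * T) := by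
    simp [sumEntries, Finset.mul_sum]
  rw [h2]
  have h3 : sumEntries N (onesMatrix N * T) = (N:ℤ) * sumEntries N T := by
    simp [sumEntries, onesMatrix, Matrix.mul_apply, Finset.mul_sum]
    rw [Finset.sum_comm]
  rw [h3]; ring

lemma connMap_AAT (N : ℕ) (T : Matrix (Fin N) (Fin N) ℤ) :
    connMap N (onesMatrix N * onesMatrix N * T) = connMap N (connMap N T) := by
  rw [connMap_eq, connMap_eq N (connMap N T), sumEntries_AAT, sumEntries_conn]

/-- for the all-ones `N × N` matrix `A`, the map `[T,k] ↦ s_N(T)/N^{2k}`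
is a well-defined group isomorphism of the inductive limit `H(A)` onto `ℤ[1/N²]`
intertwining the endomorphism `α : [T,k] ↦ [A²T, k+1]` with the identity;
consequently `α = id` on `H(A)`.  (Stated on representatives: well-definedness,
injectivity and surjectivity on classes, additivity, `ξ ∘ α = ξ`, and
`α([T,k]) = [T,k]` in `H(A)`.) -/
theorem HA_iso_zInvSq (N : ℕ) (hN : 2 ≤ N) :
    (∀ p q : Matrix (Fin N) (Fin N) ℤ × ℕ, indRel N p q → xiMap N p = xiMap N q) ∧
    (∀ p q : Matrix (Fin N) (Fin N) ℤ × ℕ, xiMap N p = xiMap N q → indRel N p q) ∧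
    (∀ p : Matrix (Fin N) (Fin N) ℤ × ℕ, xiMap N p ∈ zInvSq N) ∧
    (∀ x ∈ zInvSq N, ∃ p : Matrix (Fin N) (Fin N) ℤ × ℕ, xiMap N p = x) ∧
    (∀ (T U : Matrix (Fin N) (Fin N) ℤ) (k : ℕ),
        xiMap N (T + U, k) = xiMap N (T, k) + xiMap N (U, k)) ∧
    (∀ (T : Matrix (Fin N) (Fin N) ℤ) (k : ℕ),
        xiMap N (onesMatrix N * onesMatrix N * T, k + 1) = xiMap N (T, k)) ∧
    (∀ (T : Matrix (Fin N) (Fin N) ℤ) (k : ℕ),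
        indRel N (onesMatrix N * onesMatrix N * T, k + 1) (T, k)) := by
  have hN0 : (N : ℝ) ≠ 0 := by
    have : 0 < N := by omega
    exact_mod_cast this.ne'
  have hpow : ∀ k : ℕ, (N : ℝ) ^ (2 * k) ≠ 0 := fun k => pow_ne_zero _ hN0
  refine ⟨?_, ?_, ?_, ?_, ?_, ?_, ?_⟩
  have key : ∀ (m : ℕ) (s : ℝ) (a : ℕ), a ≤ m →
      s / (N:ℝ) ^ (2 * a) = ((N:ℝ) ^ (2 * (m - a)) * s) / (N:ℝ) ^ (2 * m) := by
    intro m s a ha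
    rw [show (N:ℝ) ^ (2 * m) = (N:ℝ) ^ (2 * (m - a)) * (N:ℝ) ^ (2 * a) from by
      rw [← pow_add]; congr 1; omega]
    rw [mul_div_mul_left _ _ (hpow _)]
  · -- well-definedness
    rintro p q ⟨m, hp, hq, h⟩
    have hsum := congrArg (sumEntries N) h
    rw [sumEntries_iter, sumEntries_iter] at hsum
    have hr : ((N:ℝ) ^ 2) ^ (m - p.2) * (sumEntries N p.1 : ℝ)
        = ((N:ℝ) ^ 2) ^ (m - q.2) * (sumEntries N q.1 : ℝ) := by exact_mod_cast hsum
    rw [← pow_mul, ← pow_mul] at hr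
    unfold xiMap
    rw [key m _ _ hp, key m _ _ hq, hr]
  · -- injectivity
    intro p q h
    set M := max p.2 q.2 with hM
    refine ⟨M + 1, by omega, by omega, ?_⟩
    have ep : M + 1 - p.2 = (M - p.2) + 1 := by omega
    have eq' : M + 1 - q.2 = (M - q.2) + 1 := by omega
    rw [ep, eq', connMap_iter_succ, connMap_iter_succ]
    congr 1
    -- integer equality via reals
    have h' : (sumEntries N p.1 : ℝ) * (N:ℝ) ^ (2 * q.2)
        = (sumEntries N q.1 : ℝ) * (N:ℝ) ^ (2 * p.2) :=
      (div_eq_div_iff (hpow _) (hpow _)).mp h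
    have hr : ((N:ℝ) ^ 2) ^ (M - p.2) * (sumEntries N p.1 : ℝ)
        = ((N:ℝ) ^ 2) ^ (M - q.2) * (sumEntries N q.1 : ℝ) := by
      apply mul_right_cancel₀ (mul_ne_zero (hpow p.2) (hpow q.2))
      calc ((N:ℝ) ^ 2) ^ (M - p.2) * (sumEntries N p.1 : ℝ)
            * ((N:ℝ) ^ (2 * p.2) * (N:ℝ) ^ (2 * q.2))
          = (((N:ℝ) ^ 2) ^ (M - p.2) * (N:ℝ) ^ (2 * p.2))
              * ((sumEntries N p.1 : ℝ) * (N:ℝ) ^ (2 * q.2)) := by ring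
        _ = (N:ℝ) ^ (2 * M) * ((sumEntries N q.1 : ℝ) * (N:ℝ) ^ (2 * p.2)) := by
            rw [h', ← pow_mul, ← pow_add]
            congr 2
            omega
        _ = (((N:ℝ) ^ 2) ^ (M - q.2) * (N:ℝ) ^ (2 * q.2))
              * ((sumEntries N q.1 : ℝ) * (N:ℝ) ^ (2 * p.2)) := by
            rw [← pow_mul, ← pow_add]
            congr 2
            omega
        _ = ((N:ℝ) ^ 2) ^ (M - q.2) * (sumEntries N q.1 : ℝ)
              * ((N:ℝ) ^ (2 * p.2) * (N:ℝ) ^ (2 * q.2)) := by ring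
    exact_mod_cast hr
  · -- range
    intro p
    exact ⟨sumEntries N p.1, p.2, rfl⟩
  · -- surjectivity
    rintro x ⟨m, k, rfl⟩
    refine ⟨(m • onesMatrix N, k + 1), ?_⟩
    unfold xiMap
    rw [sumEntries_smul]
    push_cast
    rw [show 2 * (k + 1) = 2 * k + 2 by ring, pow_add]
    field_simp
  · -- additivity
    intro T U k
    unfold xiMap
    have : sumEntries N (T + U) = sumEntries N T + sumEntries N U := by
      simp [sumEntries, Finset.sum_add_distrib]
    rw [this]
    push_cast
    rw [add_div]
  · -- ξ ∘ α = ξ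
    intro T k
    unfold xiMap
    rw [sumEntries_AAT]
    push_cast
    rw [show 2 * (k + 1) = 2 * k + 2 by ring, pow_add]
    field_simp
  · -- α = id
    intro T k
    refine ⟨k + 2, by omega, by omega, ?_⟩
    rw [show k + 2 - (k + 1) = 1 by omega, show k + 2 - k = 2 by omega]
    simp only [Function.iterate_one, Function.iterate_succ, Function.iterate_zero,
      Function.comp_apply, id_eq]
    exact connMap_AAT N T
end
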